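/- For each β > 1, each positive integer n, and each ξ ∈ ℝⁿ, the limit as u → ∞ of ∑_{k=0}^∞ (-1)^k (‖ξ‖/2)^{2k} γ((n+2k)/β, u^β) / (k! Γ(k+n/2)) equals ∑_{k=0}^∞ (-1)^k (‖ξ‖/2)^{2k} Γ((n+2k)/β) / (k! Γ(k+n/2)), where γ(s,u) is the lower incomplete Gamma function. -/
import Mathlib

open Real Filter MeasureTheory

/-- The lower incomplete Gamma function `γ(s, u) = ∫₀ᵘ e^{-t} t^{s-1} dt`. -/
noncomputable def lowerIncompleteGamma (s u : ℝ) : ℝ :=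
  ∫ t in (0 : ℝ)..u, Real.exp (-t) * t ^ (s - 1)

lemma lig_nonneg {s v : ℝ} (hv : 0 ≤ v) : 0 ≤ lowerIncompleteGamma s v := by
  apply intervalIntegral.integral_nonneg hv
  intro t ht
  have h0 : 0 ≤ t := ht.1
  positivity

lemma lig_le_Gamma {s : ℝ} (hs : 0 < s) {v : ℝ} (hv : 0 ≤ v) :
    lowerIncompleteGamma s v ≤ Real.Gamma s := by
  rw [lowerIncompleteGamma, intervalIntegral.integral_of_le hv, Real.Gamma_eq_integral hs]
  apply setIntegral_mono_set (Real.GammaIntegral_convergent hs)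
  · filter_upwards [ae_restrict_mem measurableSet_Ioi] with t ht
    have h0 : (0:ℝ) ≤ t := le_of_lt ht
    positivity
  · exact HasSubset.Subset.eventuallyLE Set.Ioc_subset_Ioi_self

lemma lig_tendsto {s : ℝ} (hs : 0 < s) {β : ℝ} (hβ : 0 < β) :
    Tendsto (fun u : ℝ => lowerIncompleteGamma s (u ^ β)) atTop (nhds (Real.Gamma s)) := by
  have h1 : Tendsto (fun v : ℝ => lowerIncompleteGamma s v) atTop (nhds (Real.Gamma s)) := by
    rw [Real.Gamma_eq_integral hs]
    exact intervalIntegral_tendsto_integral_Ioi 0 (Real.GammaIntegral_convergent hs) tendsto_id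
  exact h1.comp (tendsto_rpow_atTop hβ)

lemma Gamma_add_le {β : ℝ} (hβ : 1 < β) {s : ℝ} (hs : 0 < s) :
    Real.Gamma (s + 2 / β) ≤ Real.Gamma s * ((s + 1) * s) ^ (1 / β : ℝ) := by
  have hβ0 : (0:ℝ) < β := by linarith
  have hb : (0:ℝ) < 1 / β := by positivity
  have hb1 : 1 / β < 1 := by rw [div_lt_one hβ0]; linarith
  have ha : 0 < 1 - 1 / β := by linarith
  have hΓ : 0 < Real.Gamma s := Real.Gamma_pos_of_pos hs
  have h := Real.Gamma_mul_add_mul_le_rpow_Gamma_mul_rpow_Gamma hs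
    (show (0:ℝ) < s + 2 by linarith) ha hb (by ring)
  have heq : (1 - 1/β) * s + (1/β) * (s + 2) = s + 2/β := by ring
  rw [heq] at h
  have h2 : Real.Gamma (s + 2) = (s + 1) * s * Real.Gamma s := by
    have e : s + 2 = (s + 1) + 1 := by ring
    rw [e, Real.Gamma_add_one (by linarith), Real.Gamma_add_one (ne_of_gt hs)]
    ring
  rw [h2] at h
  have hP : (0:ℝ) ≤ (s + 1) * s := by nlinarith
  calc Real.Gamma (s + 2/β) ≤ Real.Gamma s ^ (1 - 1/β) * ((s+1)*s*Real.Gamma s) ^ (1/β : ℝ) := h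
    _ = (Real.Gamma s ^ (1 - 1/β) * Real.Gamma s ^ (1/β : ℝ)) * ((s+1)*s) ^ (1/β : ℝ) := by
        rw [Real.mul_rpow hP hΓ.le]; ring
    _ = Real.Gamma s * ((s+1)*s) ^ (1/β : ℝ) := by
        rw [← Real.rpow_add hΓ]; norm_num

theorem stmt_13 (β : ℝ) (hβ : 1 < β) (n : ℕ) (hn : 0 < n)
    (ξ : EuclideanSpace ℝ (Fin n)) :
    Tendsto (fun u : ℝ => ∑' k : ℕ,
        (-1 : ℝ) ^ k * (‖ξ‖ / 2) ^ (2 * k) *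
          lowerIncompleteGamma ((n + 2 * k) / β) (u ^ β) /
            (k.factorial * Real.Gamma (k + n / 2)))
      atTop
      (nhds (∑' k : ℕ,
        (-1 : ℝ) ^ k * (‖ξ‖ / 2) ^ (2 * k) * Real.Gamma ((n + 2 * k) / β) /
          (k.factorial * Real.Gamma (k + n / 2)))) := by
  have hβ0 : (0:ℝ) < β := by linarith
  set x : ℝ := ‖ξ‖ / 2 with hx
  have hx0 : 0 ≤ x := by positivity
  have hn' : (0:ℝ) < (n:ℝ) := by exact_mod_cast hn
  have hs : ∀ k : ℕ, (0:ℝ) < ((n:ℝ) + 2*k)/β := by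
    intro k
    apply div_pos _ hβ0
    positivity
  have hD : ∀ k : ℕ, (0:ℝ) < (k.factorial : ℝ) * Real.Gamma ((k:ℝ) + n/2) := by
    intro k
    have h1 : (0:ℝ) < (k.factorial : ℝ) := by exact_mod_cast k.factorial_pos
    have h2 : (0:ℝ) < (k:ℝ) + n/2 := by positivity
    positivity
  set bound : ℕ → ℝ := fun k => x ^ (2*k) * Real.Gamma (((n:ℝ) + 2*k)/β) /
      ((k.factorial : ℝ) * Real.Gamma ((k:ℝ) + n/2)) with hbound_def
  have hbnn : ∀ k, 0 ≤ bound k := fun k =>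
    div_nonneg (mul_nonneg (pow_nonneg hx0 _) (Real.Gamma_pos_of_pos (hs k)).le) (hD k).le
  apply tendsto_tsum_of_dominated_convergence (bound := bound)
  · -- summability of bound
    apply summable_of_ratio_norm_eventually_le (r := 1/2) (by norm_num)
    have hexp : (0:ℝ) < 2 - 2/β := by
      have h1 : 2/β < 2 := by rw [div_lt_iff₀ hβ0]; nlinarith
      linarith
    have htend : Tendsto (fun k : ℕ => (k:ℝ) ^ (2 - 2/β)) atTop atTop :=
      (tendsto_rpow_atTop hexp).comp tendsto_natCast_atTop_atTop
    filter_upwards [htend.eventually_ge_atTop (24 * x^2), eventually_ge_atTop n,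
      eventually_ge_atTop 1] with k hk24 hkn hk1
    have hkR : (1:ℝ) ≤ (k:ℝ) := by exact_mod_cast hk1
    have hk0 : (0:ℝ) < (k:ℝ) := by linarith
    have hknR : (n:ℝ) ≤ (k:ℝ) := by exact_mod_cast hkn
    set s : ℝ := ((n:ℝ) + 2*k)/β with hs_def
    have hsk : 0 < s := hs k
    have hΓ : 0 < Real.Gamma s := Real.Gamma_pos_of_pos hsk
    have hb1 : 1/β ≤ 1 := by rw [div_le_one hβ0]; linarith
    -- s ≤ 3k
    have hs3k : s ≤ 3 * k := by
      have h1 : s ≤ (n:ℝ) + 2*k := by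
        rw [hs_def]
        apply div_le_self (by positivity) (by linarith)
      linarith
    -- rpow bound
    have hA0 : (0:ℝ) ≤ (k:ℝ) ^ (2/β : ℝ) := Real.rpow_nonneg hk0.le _
    have hP : ((s+1)*s) ^ (1/β : ℝ) ≤ 12 * (k:ℝ) ^ (2/β : ℝ) := by
      have h1 : (s+1)*s ≤ 12 * (k:ℝ)^2 := by nlinarith
      have h2 : ((s+1)*s) ^ (1/β : ℝ) ≤ (12 * (k:ℝ)^2) ^ (1/β : ℝ) :=
        Real.rpow_le_rpow (by nlinarith) h1 (by positivity)
      have h3 : (12 * (k:ℝ)^2) ^ (1/β : ℝ) = (12:ℝ) ^ (1/β : ℝ) * ((k:ℝ)^2) ^ (1/β : ℝ) :=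
        Real.mul_rpow (by norm_num) (by positivity)
      have h4 : ((k:ℝ)^2) ^ (1/β : ℝ) = (k:ℝ) ^ (2/β : ℝ) := by
        rw [← Real.rpow_natCast (k:ℝ) 2, ← Real.rpow_mul hk0.le]
        congr 1
        push_cast
        ring
      have h5 : (12:ℝ) ^ (1/β : ℝ) ≤ 12 := by
        calc (12:ℝ) ^ (1/β : ℝ) ≤ (12:ℝ) ^ (1:ℝ) :=
              Real.rpow_le_rpow_of_exponent_le (by norm_num) hb1
          _ = 12 := Real.rpow_one _
      calc ((s+1)*s) ^ (1/β : ℝ) ≤ (12:ℝ) ^ (1/β : ℝ) * ((k:ℝ)^2) ^ (1/β : ℝ) := by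
            rw [← h3]; exact h2
        _ = (12:ℝ) ^ (1/β : ℝ) * (k:ℝ) ^ (2/β : ℝ) := by rw [h4]
        _ ≤ 12 * (k:ℝ) ^ (2/β : ℝ) := by
            apply mul_le_mul_of_nonneg_right h5 hA0
    -- power identity
    have hpow : (k:ℝ)^(2 - 2/β : ℝ) * (k:ℝ)^(2/β : ℝ) = (k:ℝ)^2 := by
      rw [← Real.rpow_add hk0, ← Real.rpow_natCast (k:ℝ) 2]
      norm_num
    -- key inequality
    have hSnext : ((n:ℝ) + 2 * ((k+1 : ℕ) : ℝ)) / β = s + 2/β := by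
      rw [hs_def]; push_cast; ring
    have hKey : x^2 * Real.Gamma (s + 2/β) ≤
        (1/2) * (((k:ℝ)+1) * ((k:ℝ) + n/2)) * Real.Gamma s := by
      have hG := Gamma_add_le hβ hsk
      have hnum : x^2 * (Real.Gamma s * (((s+1)*s) ^ (1/β : ℝ))) ≤
          x^2 * (Real.Gamma s * (12 * (k:ℝ) ^ (2/β : ℝ))) := by
        apply mul_le_mul_of_nonneg_left _ (sq_nonneg x)
        exact mul_le_mul_of_nonneg_left hP hΓ.le
      have h12 : 12 * x^2 * (k:ℝ) ^ (2/β : ℝ) ≤ (1/2) * ((k:ℝ)+1) * ((k:ℝ) + n/2) := by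
        have h6 : 24 * x^2 * (k:ℝ) ^ (2/β : ℝ) ≤ (k:ℝ)^(2-2/β : ℝ) * (k:ℝ)^(2/β : ℝ) :=
          mul_le_mul_of_nonneg_right hk24 hA0
        rw [hpow] at h6
        nlinarith [sq_nonneg x, hn'.le]
      calc x^2 * Real.Gamma (s + 2/β)
          ≤ x^2 * (Real.Gamma s * (((s+1)*s) ^ (1/β : ℝ))) :=
            mul_le_mul_of_nonneg_left hG (sq_nonneg x)
        _ ≤ x^2 * (Real.Gamma s * (12 * (k:ℝ) ^ (2/β : ℝ))) := hnum
        _ = (12 * x^2 * (k:ℝ) ^ (2/β : ℝ)) * Real.Gamma s := by ring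
        _ ≤ ((1/2) * ((k:ℝ)+1) * ((k:ℝ) + n/2)) * Real.Gamma s := by
            apply mul_le_mul_of_nonneg_right h12 hΓ.le
        _ = (1/2) * (((k:ℝ)+1) * ((k:ℝ) + n/2)) * Real.Gamma s := by ring
    -- recursion for denominator
    have hD1 : (((k+1).factorial : ℕ) : ℝ) * Real.Gamma (((k+1:ℕ):ℝ) + n/2) =
        (((k:ℝ)+1) * ((k:ℝ) + n/2)) * ((k.factorial : ℝ) * Real.Gamma ((k:ℝ) + n/2)) := by
      have e1 : ((k+1:ℕ):ℝ) + (n:ℝ)/2 = ((k:ℝ) + n/2) + 1 := by push_cast; ring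
      rw [e1, Real.Gamma_add_one (ne_of_gt (by positivity)), Nat.factorial_succ]
      push_cast
      ring
    have hc : (0:ℝ) < ((k:ℝ)+1) * ((k:ℝ) + n/2) := by positivity
    rw [Real.norm_eq_abs, Real.norm_eq_abs, abs_of_nonneg (hbnn _), abs_of_nonneg (hbnn _)]
    calc bound (k+1)
        = x^(2*k) * (x^2 * Real.Gamma (s + 2/β)) /
            ((((k:ℝ)+1) * ((k:ℝ) + n/2)) * ((k.factorial : ℝ) * Real.Gamma ((k:ℝ) + n/2))) := by
          simp only [hbound_def]
          rw [hSnext, hD1]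
          ring
      _ ≤ x^(2*k) * ((1/2) * (((k:ℝ)+1) * ((k:ℝ) + n/2)) * Real.Gamma s) /
            ((((k:ℝ)+1) * ((k:ℝ) + n/2)) * ((k.factorial : ℝ) * Real.Gamma ((k:ℝ) + n/2))) := by
          have hfac : (0:ℝ) < (k.factorial : ℝ) := by exact_mod_cast k.factorial_pos
          have hΓk : (0:ℝ) < Real.Gamma ((k:ℝ) + n/2) := by positivity
          gcongr
      _ = 1/2 * bound k := by
          simp only [hbound_def]
          field_simp
          ring
  · intro k
    exact ((lig_tendsto (hs k) hβ0).const_mul _).div_const _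
  · filter_upwards [eventually_ge_atTop (0:ℝ)] with u hu k
    have hv : (0:ℝ) ≤ u ^ β := Real.rpow_nonneg hu β
    have h0 := lig_nonneg (s := ((n:ℝ)+2*k)/β) hv
    have h1 := lig_le_Gamma (hs k) hv
    have hΓk : (0:ℝ) < Real.Gamma ((k:ℝ) + n/2) := by positivity
    rw [Real.norm_eq_abs, abs_div, abs_mul, abs_mul, abs_pow, abs_pow, abs_neg, abs_one,
      one_pow, one_mul, abs_of_nonneg hx0, abs_of_nonneg h0, abs_mul, Nat.abs_cast,
      abs_of_nonneg hΓk.le]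
    rw [hbound_def]
    have hfac : (0:ℝ) < (k.factorial : ℝ) := by exact_mod_cast k.factorial_pos
    simp only [hbound_def]
    gcongr
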